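/- Let K_{n,m} be the complete bipartite graph and f a proper labeling of its vertices (a bijection f: {1,…,n+m} → V(K_{n,m}) such that {f(1),…,f(k)} induces a connected subgraph for all k). Then the monotone-path tree T_f(K_{n,m}) has spectral radius exactly √(n+m-1). -/

import Mathlib

open Finset
open scoped Classical

/-- A monotone path of a labeled graph `(H, f)` (with labels in `Fin (N+1)`), encoded by its
set of labels: it contains the label `0`, and consecutive labels (in increasing order) are
mapped by `f` to adjacent vertices of `H`. -/
def IsMonPath {N : ℕ} {W : Type*} (H : SimpleGraph W) (f : Fin (N + 1) ≃ W)
    (S : Finset (Fin (N + 1))) : Prop :=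
  (0 : Fin (N + 1)) ∈ S ∧
    (S.sort (· ≤ ·)).Chain' fun a b => H.Adj (f a) (f b)

/-- The monotone-path tree `T_f(H)`: vertices are monotone paths, two being adjacent iff one
is obtained from the other by appending exactly one vertex (of larger label) at the end. -/
noncomputable def MPT {N : ℕ} {W : Type*} (H : SimpleGraph W) (f : Fin (N + 1) ≃ W) :
    SimpleGraph {S : Finset (Fin (N + 1)) // IsMonPath H f S} :=
  SimpleGraph.fromRel fun p q =>
    ∃ a, a ∉ p.1 ∧ q.1 = insert a p.1 ∧ ∀ b ∈ p.1, b < a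

noncomputable def qq (N : ℕ) (sd : ℕ → Bool) (i : ℕ) : ℝ :=
  (N : ℝ) / ((N : ℝ) - ∑ a ∈ (Finset.Ioc i N).attach,
    if sd a.1 = sd i then 0 else qq N sd a.1)
termination_by N + 1 - i
decreasing_by
  have h := a.2
  simp only [Finset.mem_Ioc] at h
  omega

noncomputable def SS (N : ℕ) (sd : ℕ → Bool) (i : ℕ) (b : Bool) : ℝ :=
  ∑ a ∈ Finset.Ioc i N, if sd a = b then qq N sd a else 0

lemma qq_eq (N : ℕ) (sd : ℕ → Bool) (i : ℕ) :
    qq N sd i = (N : ℝ) / ((N : ℝ) - SS N sd i (!sd i)) := by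
  rw [qq, SS]
  congr 2
  rw [← Finset.sum_attach (Finset.Ioc i N) (fun a => if sd a = !sd i then qq N sd a else 0)]
  apply Finset.sum_congr rfl
  intro a _
  cases h : sd a <;> cases h2 : sd i <;> simp [h, h2]

lemma SS_succ (N : ℕ) (sd : ℕ → Bool) (i : ℕ) (b : Bool) (h : i < N) :
    SS N sd i b = (if sd (i+1) = b then qq N sd (i+1) else 0) + SS N sd (i+1) b := by
  rw [SS, SS, show Finset.Ioc i N = insert (i+1) (Finset.Ioc (i+1) N) by
      rw [Finset.Ioc_insert_left (by omega), Finset.Icc_add_one_left_eq_Ioc],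
    Finset.sum_insert (by simp)]

lemma inv (N : ℕ) (hN : 1 ≤ N) (sd : ℕ → Bool) :
    ∀ k i, 1 ≤ i → i + k = N →
      0 ≤ SS N sd i true ∧ 0 ≤ SS N sd i false ∧
      SS N sd i true < N ∧ SS N sd i false < N ∧
      ((N:ℝ) - SS N sd i true) * ((N:ℝ) - SS N sd i false) = (N:ℝ) * (i:ℝ) := by
  have hN0 : (0:ℝ) < N := by exact_mod_cast hN
  intro k
  induction k with
  | zero =>
    intro i h1 h2
    have : i = N := by omega
    subst this
    simp [SS, hN0]
  | succ k ih =>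
    intro i h1 h2
    obtain ⟨n1, n2, l1, l2, pr⟩ := ih (i+1) (by omega) (by omega)
    have hiN : i < N := by omega
    have hipos : (1:ℝ) ≤ (i:ℝ) := by exact_mod_cast h1
    have prc : ((N:ℝ) - SS N sd (i+1) true) * ((N:ℝ) - SS N sd (i+1) false)
        = (N:ℝ) * (i:ℝ) + N := by rw [pr]; push_cast; ring
    cases hb : sd (i+1)
    · -- sd (i+1) = false
      have e1 : SS N sd i true = SS N sd (i+1) true := by
        rw [SS_succ N sd i true hiN, hb]; simp
      have e2 : SS N sd i false = qq N sd (i+1) + SS N sd (i+1) false := by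
        rw [SS_succ N sd i false hiN, hb]; simp
      have hq : qq N sd (i+1) = (N:ℝ) / ((N:ℝ) - SS N sd (i+1) true) := by
        rw [qq_eq, hb]; simp
      have hden : (0:ℝ) < (N:ℝ) - SS N sd (i+1) true := by linarith
      have hqpos : 0 < qq N sd (i+1) := by rw [hq]; positivity
      have hmul : qq N sd (i+1) * ((N:ℝ) - SS N sd (i+1) true) = N := by
        rw [hq]; field_simp
      have hnew : ((N:ℝ) - SS N sd i true) * ((N:ℝ) - SS N sd i false) = (N:ℝ) * (i:ℝ) := by
        rw [e1, e2]; nlinarith [prc, hmul]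
      have hlt : SS N sd i false < N := by
        rw [e1] at hnew
        nlinarith
      exact ⟨by rw [e1]; linarith, by rw [e2]; positivity, by rw [e1]; linarith, hlt, hnew⟩
    · -- sd (i+1) = true
      have e1 : SS N sd i true = qq N sd (i+1) + SS N sd (i+1) true := by
        rw [SS_succ N sd i true hiN, hb]; simp
      have e2 : SS N sd i false = SS N sd (i+1) false := by
        rw [SS_succ N sd i false hiN, hb]; simp
      have hq : qq N sd (i+1) = (N:ℝ) / ((N:ℝ) - SS N sd (i+1) false) := by
        rw [qq_eq, hb]; simp
      have hden : (0:ℝ) < (N:ℝ) - SS N sd (i+1) false := by linarith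
      have hqpos : 0 < qq N sd (i+1) := by rw [hq]; positivity
      have hmul : qq N sd (i+1) * ((N:ℝ) - SS N sd (i+1) false) = N := by
        rw [hq]; field_simp
      have hnew : ((N:ℝ) - SS N sd i true) * ((N:ℝ) - SS N sd i false) = (N:ℝ) * (i:ℝ) := by
        rw [e1, e2]; nlinarith [prc, hmul]
      have hlt : SS N sd i true < N := by
        rw [e2] at hnew
        nlinarith
      exact ⟨by rw [e1]; positivity, by rw [e2]; linarith, hlt, by rw [e2]; linarith, hnew⟩

lemma SS_lt (N : ℕ) (hN : 1 ≤ N) (sd : ℕ → Bool) (i : ℕ) (h1 : 1 ≤ i) (h2 : i ≤ N)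
    (b : Bool) : SS N sd i b < N := by
  obtain ⟨_, _, l1, l2, _⟩ := inv N hN sd (N - i) i h1 (by omega)
  cases b
  · exact l2
  · exact l1

lemma qq_pos (N : ℕ) (hN : 1 ≤ N) (sd : ℕ → Bool) (i : ℕ) (h1 : 1 ≤ i) (h2 : i ≤ N) :
    0 < qq N sd i := by
  rw [qq_eq]
  have := SS_lt N hN sd i h1 h2 (!sd i)
  have hN0 : (0:ℝ) < N := by exact_mod_cast hN
  apply div_pos hN0
  linarith

/-- The key: `N/(qq i) = N - SS N sd i (!sd i)`. -/
lemma qq_inv (N : ℕ) (hN : 1 ≤ N) (sd : ℕ → Bool) (i : ℕ) (h1 : 1 ≤ i) (h2 : i ≤ N) :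
    (N:ℝ) / qq N sd i = (N:ℝ) - SS N sd i (!sd i) := by
  have := SS_lt N hN sd i h1 h2 (!sd i)
  have hN0 : (0:ℝ) < N := by exact_mod_cast hN
  rw [qq_eq, div_div_eq_mul_div, mul_comm, mul_div_assoc, div_self (by linarith : (N:ℝ) ≠ 0),
    mul_one]

lemma root_sum (N : ℕ) (hN : 1 ≤ N) (sd : ℕ → Bool) (h01 : sd 1 = !sd 0) :
    SS N sd 0 (!sd 0) = N := by
  have hN0 : (0:ℝ) < N := by exact_mod_cast hN
  obtain ⟨n1, n2, l1, l2, pr⟩ := inv N hN sd (N - 1) 1 le_rfl (by omega)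
  have e := SS_succ N sd 0 (!sd 0) (by omega)
  rw [if_pos h01] at e
  have hq := qq_eq N sd 1
  have pr' : ((N:ℝ) - SS N sd 1 true) * ((N:ℝ) - SS N sd 1 false) = N := by
    rw [pr]; push_cast; ring
  rw [e, hq]
  cases h : sd 0
  · simp only [h, Bool.not_false] at h01 ⊢
    rw [h01] at hq ⊢
    simp only [Bool.not_true]
    have : ((N:ℝ) - SS N sd 1 false) ≠ 0 := by linarith
    field_simp
    nlinarith [pr']
  · simp only [h, Bool.not_true] at h01 ⊢
    rw [h01] at hq ⊢
    simp only [Bool.not_false]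
    have : ((N:ℝ) - SS N sd 1 true) ≠ 0 := by linarith
    field_simp
    nlinarith [pr']

lemma SS_def (N : ℕ) (sd : ℕ → Bool) (i : ℕ) (b : Bool) :
    SS N sd i b = ∑ a ∈ Finset.Ioc i N, if sd a = b then qq N sd a else 0 := rfl

variable {α : Type*} [LinearOrder α]

lemma sort_insert_max [DecidableEq α] {S : Finset α} {a : α} (h1 : ∀ b ∈ S, b < a) :
    (insert a S).sort (· ≤ ·) = S.sort (· ≤ ·) ++ [a] := by
  have h2 : a ∉ S := fun h => absurd (h1 a h) (lt_irrefl a)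
  have hperm : List.Perm ((insert a S).sort (· ≤ ·)) (S.sort (· ≤ ·) ++ [a]) := by
    refine ((Finset.sort_perm_toList _ _).trans ((Finset.toList_insert h2).trans ?_))
    exact (List.Perm.cons a (Finset.sort_perm_toList _ _).symm).trans
      (List.perm_append_singleton a _).symm
  refine List.Perm.eq_of_pairwise' (Finset.pairwise_sort _ _) ?_ hperm
  rw [List.pairwise_append]
  refine ⟨Finset.pairwise_sort _ _, List.pairwise_singleton _ a, ?_⟩
  intro x hx y hy
  rw [List.mem_singleton] at hy
  subst hy
  exact le_of_lt (h1 x ((Finset.mem_sort _).mp hx))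

lemma sort_getLast' (S : Finset α) (h : S.Nonempty) :
    (S.sort (· ≤ ·)).getLast? = some (S.max' h) := by
  have hne : S.sort (· ≤ ·) ≠ [] := by
    intro hc
    have h2 := Finset.length_sort (α := α) (· ≤ ·) (s := S)
    rw [hc] at h2
    simp at h2
    exact h.card_pos.ne' h2.symm
  rw [List.getLast?_eq_getElem?, List.getElem?_eq_getElem
    (by simpa using Nat.sub_lt (List.length_pos_iff.mpr hne) Nat.zero_lt_one)]
  rw [Finset.max'_eq_sorted_last]

section Aux

variable {n m N : ℕ} (f : Fin (N + 1) ≃ (Fin n ⊕ Fin m))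

/-- side of a label -/
def sdF (i : Fin (N + 1)) : Bool := (f i).isLeft

lemma adj_iff (a b : Fin (N + 1)) :
    (completeBipartiteGraph (Fin n) (Fin m)).Adj (f a) (f b) ↔ sdF f a ≠ sdF f b := by
  rcases ha : f a with x | x <;> rcases hb : f b with y | y <;>
    simp [sdF, ha, hb]

abbrev MV := {S : Finset (Fin (N + 1)) // IsMonPath (completeBipartiteGraph (Fin n) (Fin m)) f S}

/-- top label of a monotone path -/
def topP (P : MV f) : Fin (N + 1) := P.1.max' ⟨0, P.2.1⟩

lemma topP_mem (P : MV f) : topP f P ∈ P.1 := Finset.max'_mem _ _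

lemma le_topP (P : MV f) {b : Fin (N + 1)} (hb : b ∈ P.1) : b ≤ topP f P :=
  Finset.le_max' _ _ hb

lemma lt_top_iff_all (P : MV f) (a : Fin (N + 1)) :
    (∀ b ∈ P.1, b < a) ↔ topP f P < a :=
  ⟨fun h => h _ (topP_mem f P), fun h b hb => lt_of_le_of_lt (le_topP f P hb) h⟩

lemma insert_monpath_iff (P : MV f) (a : Fin (N + 1)) (ha : topP f P < a) :
    IsMonPath (completeBipartiteGraph (Fin n) (Fin m)) f (insert a P.1) ↔
      sdF f (topP f P) ≠ sdF f a := by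
  have hall : ∀ b ∈ P.1, b < a := (lt_top_iff_all f P a).mpr ha
  have hs : (insert a P.1).sort (· ≤ ·) = P.1.sort (· ≤ ·) ++ [a] := sort_insert_max hall
  unfold IsMonPath
  rw [hs]; unfold List.Chain'; rw [List.isChain_append]
  have h0 : (0 : Fin (N+1)) ∈ insert a P.1 := Finset.mem_insert_of_mem P.2.1
  have hlast : (P.1.sort (· ≤ ·)).getLast? = some (topP f P) := sort_getLast' _ _
  constructor
  · rintro ⟨-, -, hc, hR⟩
    have := hR (topP f P) (by rw [hlast]; rfl) a (by rfl)
    exact (adj_iff f _ _).mp this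
  · intro hsd
    refine ⟨h0, P.2.2, List.isChain_singleton a, ?_⟩
    intro x hx y hy
    rw [hlast, Option.mem_def, Option.some_inj] at hx
    rw [List.head?_cons, Option.mem_def, Option.some_inj] at hy
    subst hx; subst hy
    exact (adj_iff f _ _).mpr hsd

lemma topP_ne_zero (P : MV f) (hP : P.1 ≠ {0}) : topP f P ≠ 0 := by
  intro h
  apply hP
  apply Finset.eq_singleton_iff_unique_mem.mpr
  refine ⟨P.2.1, fun x hx => ?_⟩
  have := le_topP f P hx
  rw [h] at this
  exact le_antisymm this (Fin.zero_le x)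

lemma parent_lt (P : MV f) {b : Fin (N+1)} (hb : b ∈ P.1.erase (topP f P)) : b < topP f P :=
  lt_of_le_of_ne (le_topP f P (Finset.mem_of_mem_erase hb)) (Finset.ne_of_mem_erase hb)

lemma insert_erase_top (P : MV f) : insert (topP f P) (P.1.erase (topP f P)) = P.1 :=
  Finset.insert_erase (topP_mem f P)

lemma parent_monpath (P : MV f) (hP : P.1 ≠ {0}) :
    IsMonPath (completeBipartiteGraph (Fin n) (Fin m)) f (P.1.erase (topP f P)) := by
  have h0 : (0 : Fin (N+1)) ∈ P.1.erase (topP f P) :=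
    Finset.mem_erase.mpr ⟨Ne.symm (topP_ne_zero f P hP), P.2.1⟩
  have hs : P.1.sort (· ≤ ·) = (P.1.erase (topP f P)).sort (· ≤ ·) ++ [topP f P] := by
    conv_lhs => rw [← insert_erase_top f P]
    exact sort_insert_max (fun b hb => parent_lt f P hb)
  have hc := P.2.2
  rw [hs] at hc; unfold List.Chain' at hc; rw [List.isChain_append] at hc
  exact ⟨h0, hc.1⟩

end Aux

section Aux2
variable {n m N : ℕ} (f : Fin (N + 1) ≃ (Fin n ⊕ Fin m))

/-- the relation generating MPT -/
def relC (p q : MV f) : Prop := ∃ a, a ∉ p.1 ∧ q.1 = insert a p.1 ∧ ∀ b ∈ p.1, b < a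

lemma mpt_adj (p q : MV f) :
    (MPT (completeBipartiteGraph (Fin n) (Fin m)) f).Adj p q ↔ relC f p q ∨ relC f q p := by
  rw [MPT, SimpleGraph.fromRel_adj]
  constructor
  · rintro ⟨-, h⟩; exact h
  · intro h
    refine ⟨?_, h⟩
    rcases h with ⟨a, ha, hq, -⟩ | ⟨a, ha, hq, -⟩
    · intro hc; rw [hc] at ha; apply ha; rw [hq]; exact Finset.mem_insert_self a _
    · intro hc; rw [← hc] at ha; apply ha; rw [hq]; exact Finset.mem_insert_self a _

lemma relC_card {p q : MV f} (h : relC f p q) : q.1.card = p.1.card + 1 := by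
  obtain ⟨a, ha, hq, -⟩ := h
  rw [hq, Finset.card_insert_of_notMem ha]

lemma relC_child (p q : MV f) :
    relC f p q ↔ ∃ a, topP f p < a ∧ q.1 = insert a p.1 := by
  constructor
  · rintro ⟨a, ha, hq, hlt⟩
    exact ⟨a, (lt_top_iff_all f p a).mp hlt, hq⟩
  · rintro ⟨a, ha, hq⟩
    have hall := (lt_top_iff_all f p a).mpr ha
    exact ⟨a, fun hc => lt_irrefl a (hall a hc), hq, hall⟩

lemma relC_parent (p q : MV f) :
    relC f q p ↔ (p.1 ≠ {0} ∧ q.1 = p.1.erase (topP f p)) := by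
  constructor
  · rintro ⟨a, ha, hp, hlt⟩
    have haP : a ∈ p.1 := by rw [hp]; exact Finset.mem_insert_self a _
    have hmax : ∀ b ∈ p.1, b ≤ a := by
      intro b hb
      rw [hp] at hb
      rcases Finset.mem_insert.mp hb with rfl | hb
      · exact le_rfl
      · exact le_of_lt (hlt b hb)
    have hta : topP f p = a := le_antisymm (hmax _ (topP_mem f p)) (le_topP f p haP)
    have h0q : (0 : Fin (N+1)) ∈ q.1 := q.2.1
    have ha0 : a ≠ 0 := by
      intro hc; subst hc
      exact lt_irrefl 0 (hlt 0 h0q)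
    constructor
    · intro hc
      rw [hc] at haP
      exact ha0 (Finset.mem_singleton.mp haP)
    · rw [hta, hp, Finset.erase_insert ha]
  · rintro ⟨hne, hq⟩
    refine ⟨topP f p, ?_, ?_, ?_⟩
    · rw [hq]; exact Finset.notMem_erase _ _
    · rw [hq, insert_erase_top]
    · intro b hb; rw [hq] at hb; exact parent_lt f p hb

noncomputable def sdN : ℕ → Bool := fun j => if h : j < N + 1 then sdF f ⟨j, h⟩ else true

lemma sdN_eq (i : Fin (N+1)) : sdN f i.val = sdF f i := by
  simp only [sdN, i.isLt, dif_pos, Fin.eta]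

noncomputable def qN (i : Fin (N+1)) : ℝ := qq N (sdN f) i.val

noncomputable def wF (P : MV f) : ℝ := ∏ b ∈ P.1.erase 0, (qN f b / Real.sqrt N)

lemma qN_pos (hN1 : 1 ≤ N) (i : Fin (N+1)) (hi : i ≠ 0) : 0 < qN f i := by
  apply qq_pos N hN1
  · have : i.val ≠ 0 := fun hc => hi (Fin.ext hc)
    omega
  · omega

lemma wF_pos (hN1 : 1 ≤ N) (P : MV f) : 0 < wF f P := by
  apply Finset.prod_pos
  intro b hb
  have hb0 : b ≠ 0 := Finset.ne_of_mem_erase hb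
  have hs : (0:ℝ) < Real.sqrt N := Real.sqrt_pos.mpr (by exact_mod_cast hN1)
  exact div_pos (qN_pos f hN1 b hb0) hs

lemma wF_insert (P : MV f) (a : Fin (N+1)) (ha : topP f P < a)
    (hq : IsMonPath (completeBipartiteGraph (Fin n) (Fin m)) f (insert a P.1)) :
    wF f (⟨insert a P.1, hq⟩ : MV f) = wF f P * (qN f a / Real.sqrt N) := by
  have ha0 : a ≠ 0 := by
    intro hc
    have := lt_of_le_of_lt (Fin.zero_le (topP f P)) ha
    rw [hc] at this
    exact lt_irrefl 0 this
  have haP : a ∉ P.1 := fun hc => lt_irrefl a (lt_of_le_of_lt (le_topP f P hc) ha)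
  show (∏ b ∈ (insert a P.1).erase 0, (qN f b / Real.sqrt N)) = _
  rw [Finset.erase_insert_of_ne ha0, Finset.prod_insert (fun hc => haP (Finset.mem_of_mem_erase hc)),
    mul_comm]
  rfl

end Aux2

section Aux3
variable {n m N : ℕ} (f : Fin (N + 1) ≃ (Fin n ⊕ Fin m))

lemma top_child (P Q : MV f) (a : Fin (N+1)) (ha : topP f P < a) (hq : Q.1 = insert a P.1) :
    topP f Q = a := by
  apply le_antisymm
  · apply Finset.max'_le
    intro b hb
    rw [hq] at hb
    rcases Finset.mem_insert.mp hb with rfl | hb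
    · exact le_rfl
    · exact le_of_lt (lt_of_le_of_lt (le_topP f P hb) ha)
  · apply le_topP
    rw [hq]; exact Finset.mem_insert_self a _

lemma sum_children (hN1 : 1 ≤ N) (P : MV f) :
    ∑ a ∈ Finset.univ.filter
        (fun a : Fin (N+1) => topP f P < a ∧ sdF f (topP f P) ≠ sdF f a), qN f a
      = SS N (sdN f) (topP f P).val (!(sdN f) (topP f P).val) := by
  rw [SS_def, ← Finset.sum_filter]
  apply Finset.sum_nbij' (i := fun a => (a : Fin (N+1)).val)
    (j := fun j => (⟨j % (N+1), Nat.mod_lt _ (by omega)⟩ : Fin (N+1)))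
  · intro a ha
    simp only [Finset.mem_filter, Finset.mem_univ, true_and] at ha
    simp only [Finset.mem_filter, Finset.mem_Ioc]
    refine ⟨⟨ha.1, by omega⟩, ?_⟩
    rw [sdN_eq]
    have := ha.2
    cases hx : sdF f a <;> cases hy : sdF f (topP f P) <;>
      simp_all [sdN_eq]
  · intro j hj
    simp only [Finset.mem_filter, Finset.mem_Ioc] at hj
    have hjlt : j < N + 1 := by omega
    have hmod : (⟨j % (N+1), Nat.mod_lt _ (by omega)⟩ : Fin (N+1)) = ⟨j, hjlt⟩ :=
      Fin.ext (Nat.mod_eq_of_lt hjlt)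
    simp only [Finset.mem_filter, Finset.mem_univ, true_and, hmod]
    constructor
    · rw [Fin.lt_def]
      exact hj.1.1
    · have h2 := hj.2
      rw [show sdN f j = sdF f ⟨j, hjlt⟩ from by simp [sdN, hjlt]] at h2
      rw [sdN_eq] at h2
      intro hc
      rw [← hc] at h2
      cases hx : sdF f (topP f P) <;> simp_all
  · intro a ha
    apply Fin.ext
    simp [Nat.mod_eq_of_lt a.isLt]
  · intro j hj
    simp only [Finset.mem_filter, Finset.mem_Ioc] at hj
    simp [Nat.mod_eq_of_lt (show j < N+1 by omega)]
  · intro a ha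
    rfl

lemma eigen (hN1 : 1 ≤ N) (hside : sdN f 1 = !(sdN f 0)) (P : MV f) :
    ∑ Q : MV f, (if (MPT (completeBipartiteGraph (Fin n) (Fin m)) f).Adj P Q
      then (1:ℝ) else 0) * wF f Q = Real.sqrt N * wF f P := by
  have hNr : (0:ℝ) < N := by exact_mod_cast hN1
  have hs0 : (0:ℝ) < Real.sqrt N := Real.sqrt_pos.mpr hNr
  have hss : Real.sqrt N * Real.sqrt N = N := Real.mul_self_sqrt (le_of_lt hNr)
  have hsplit : ∀ Q : MV f,
      (if (MPT (completeBipartiteGraph (Fin n) (Fin m)) f).Adj P Q then (1:ℝ) else 0) * wF f Q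
        = (if relC f P Q then wF f Q else 0) + (if relC f Q P then wF f Q else 0) := by
    intro Q
    by_cases h1 : relC f P Q <;> by_cases h2 : relC f Q P
    · exfalso
      have c1 := relC_card f h1
      have c2 := relC_card f h2
      omega
    · rw [if_pos h1, if_neg h2, if_pos ((mpt_adj f P Q).mpr (Or.inl h1)), one_mul, add_zero]
    · rw [if_neg h1, if_pos h2, if_pos ((mpt_adj f P Q).mpr (Or.inr h2)), one_mul, zero_add]
    · rw [if_neg h1, if_neg h2, if_neg (fun hc => by
        rcases (mpt_adj f P Q).mp hc with h | h
        exacts [h1 h, h2 h]), zero_mul, add_zero]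
  rw [Finset.sum_congr rfl (fun Q _ => hsplit Q), Finset.sum_add_distrib]
  -- children part
  have hchild : ∑ Q : MV f, (if relC f P Q then wF f Q else 0)
      = wF f P / Real.sqrt N * SS N (sdN f) (topP f P).val (!(sdN f) (topP f P).val) := by
    rw [← sum_children f hN1 P, Finset.mul_sum, ← Finset.sum_filter]
    apply Finset.sum_bij (i := fun (Q : MV f) (_ : Q ∈ Finset.univ.filter (relC f P ·)) =>
      topP f Q)
    · intro Q hQ
      simp only [Finset.mem_filter, Finset.mem_univ, true_and] at hQ
      obtain ⟨a, ha, hq⟩ := (relC_child f P Q).mp hQ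
      have htop := top_child f P Q a ha hq
      rw [htop, Finset.mem_filter]
      refine ⟨Finset.mem_univ a, ha, ?_⟩
      have hmp := Q.2
      rw [hq] at hmp
      exact (insert_monpath_iff f P a ha).mp hmp
    · intro Q1 h1 Q2 h2 heq
      simp only [Finset.mem_filter, Finset.mem_univ, true_and] at h1 h2
      obtain ⟨a1, ha1, hq1⟩ := (relC_child f P Q1).mp h1
      obtain ⟨a2, ha2, hq2⟩ := (relC_child f P Q2).mp h2
      rw [top_child f P Q1 a1 ha1 hq1, top_child f P Q2 a2 ha2 hq2] at heq
      subst heq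
      exact Subtype.ext (hq1.trans hq2.symm)
    · intro a ha
      simp only [Finset.mem_filter, Finset.mem_univ, true_and] at ha
      obtain ⟨hlt, hsd⟩ := ha
      refine ⟨⟨insert a P.1, (insert_monpath_iff f P a hlt).mpr hsd⟩,
        Finset.mem_filter.mpr ⟨Finset.mem_univ _, (relC_child f P _).mpr ⟨a, hlt, rfl⟩⟩, ?_⟩
      exact top_child f P _ a hlt rfl
    · intro Q hQ
      simp only [Finset.mem_filter, Finset.mem_univ, true_and] at hQ
      obtain ⟨a, ha, hq⟩ := (relC_child f P Q).mp hQ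
      have htop := top_child f P Q a ha hq
      have : Q = ⟨insert a P.1, by rw [← hq]; exact Q.2⟩ := Subtype.ext hq
      rw [htop, this, wF_insert f P a ha]
      ring
  rw [hchild]
  -- parent part
  by_cases hroot : P.1 = {0}
  · have hz : ∀ Q : MV f, ¬ relC f Q P := by
      intro Q hc
      exact ((relC_parent f P Q).mp hc).1 hroot
    have hpar : ∑ Q : MV f, (if relC f Q P then wF f Q else 0) = 0 := by
      apply Finset.sum_eq_zero
      intro Q _
      rw [if_neg (hz Q)]
    rw [hpar, add_zero]
    have htop0 : topP f P = 0 := by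
      have := topP_mem f P
      rw [hroot] at this
      exact Finset.mem_singleton.mp this
    rw [htop0]
    have hr := root_sum N hN1 (sdN f) hside
    show wF f P / Real.sqrt N * SS N (sdN f) (0 : Fin (N+1)).val (!(sdN f) (0 : Fin (N+1)).val)
      = _
    have : ((0 : Fin (N+1)).val) = 0 := rfl
    rw [this, hr]
    field_simp
    linear_combination (-(wF f P)) * hss
  · -- non-root
    set t := topP f P with ht
    have htne : t ≠ 0 := topP_ne_zero f P hroot
    have ht1 : 1 ≤ t.val := by
      have : t.val ≠ 0 := fun hc => htne (Fin.ext hc)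
      omega
    have htN : t.val ≤ N := by omega
    set Pa : MV f := ⟨P.1.erase t, parent_monpath f P hroot⟩ with hPa
    have hpar : ∑ Q : MV f, (if relC f Q P then wF f Q else 0) = wF f Pa := by
      have hiff : ∀ Q : MV f, relC f Q P ↔ Q = Pa := by
        intro Q
        rw [relC_parent f P Q]
        constructor
        · rintro ⟨-, hq⟩; exact Subtype.ext hq
        · rintro rfl; exact ⟨hroot, rfl⟩
      calc ∑ Q : MV f, (if relC f Q P then wF f Q else 0)
          = ∑ Q : MV f, (if Q = Pa then wF f Q else 0) := by
            apply Finset.sum_congr rfl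
            intro Q _
            rw [if_congr (hiff Q) rfl rfl]
        _ = wF f Pa := by rw [Finset.sum_ite_eq' Finset.univ Pa (wF f), if_pos (Finset.mem_univ _)]
    rw [hpar]
    -- wF P = wF Pa * (qN t / sqrt N)
    have htopPa : topP f Pa < t := by
      have := topP_mem f Pa
      exact parent_lt f P this
    have hwp : wF f P = wF f Pa * (qN f t / Real.sqrt N) := by
      have hins := wF_insert f Pa t htopPa (by rw [insert_erase_top f P]; exact P.2)
      have : P = ⟨insert t Pa.1, by rw [insert_erase_top f P]; exact P.2⟩ :=
        Subtype.ext (insert_erase_top f P).symm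
      rw [this]
      exact hins
    have hq_pos : 0 < qN f t := qN_pos f hN1 t htne
    have hinv := qq_inv N hN1 (sdN f) t.val ht1 htN
    have hSS : SS N (sdN f) t.val (!(sdN f) t.val) = (N:ℝ) - (N:ℝ) / qN f t := by
      have h2 : (N:ℝ) / qN f t = (N:ℝ) - SS N (sdN f) t.val (!(sdN f) t.val) := hinv
      linarith
    rw [hSS, hwp]
    have hwPa : 0 < wF f Pa := wF_pos f hN1 Pa
    field_simp
    ring_nf
    rw [Real.sq_sqrt (le_of_lt hNr)]
    ring

end Aux3

section Aux4
variable {n m N : ℕ} (f : Fin (N + 1) ≃ (Fin n ⊕ Fin m))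

/-- the trivial monotone path -/
def rootP : MV f := ⟨{0}, Finset.mem_singleton_self 0, by
  rw [Finset.sort_singleton]
  exact List.isChain_singleton 0⟩

lemma side01 (hN1 : 1 ≤ N)
    (hf : ∀ k : Fin (N + 1),
      ((completeBipartiteGraph (Fin n) (Fin m)).induce {v | ∃ i ≤ k, f i = v}).Connected) :
    sdN f 1 = !(sdN f 0) := by
  have h1lt : (1 : ℕ) < N + 1 := by omega
  have hv1 : ((1 : Fin (N+1))).val = 1 := by
    simp [Fin.val_one', Nat.mod_eq_of_lt h1lt]
  have e1 : sdN f 1 = sdF f (1 : Fin (N+1)) := by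
    simp only [sdN, dif_pos h1lt]
    congr 1
    exact Fin.ext hv1.symm
  have e0 : sdN f 0 = sdF f (0 : Fin (N+1)) := by
    exact sdN_eq f (0 : Fin (N+1))
  rw [e1, e0]
  by_contra hcon
  have h : sdF f (1 : Fin (N+1)) = sdF f (0 : Fin (N+1)) := by
    cases h1 : sdF f (1 : Fin (N+1)) <;> cases h0 : sdF f (0 : Fin (N+1)) <;> simp_all
  have hne01 : (0 : Fin (N+1)) ≠ 1 := by
    intro hc
    have := congrArg Fin.val hc
    rw [hv1] at this
    exact absurd this (by simp)
  have hc := hf 1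
  set s : Set (Fin n ⊕ Fin m) := {v | ∃ i ≤ (1 : Fin (N+1)), f i = v} with hs
  have h0s : f 0 ∈ s := ⟨0, by simp [Fin.le_def, hv1], rfl⟩
  have h1s : f 1 ∈ s := ⟨1, le_rfl, rfl⟩
  have hmem : ∀ v ∈ s, sdF f (f.symm v) = sdF f (0 : Fin (N+1)) := by
    rintro v ⟨i, hi, rfl⟩
    rw [Equiv.symm_apply_apply]
    have : i = 0 ∨ i = 1 := by
      have : i.val ≤ 1 := by
        rw [Fin.le_def, hv1] at hi
        exact hi
      rcases Nat.le_one_iff_eq_zero_or_eq_one.mp this with h' | h'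
      · left; exact Fin.ext h'
      · right; apply Fin.ext; rw [h', hv1]
    rcases this with rfl | rfl
    · rfl
    · exact h
  have hnoedge : ∀ (x y : s),
      ¬ ((completeBipartiteGraph (Fin n) (Fin m)).induce s).Adj x y := by
    intro x y hadj
    rw [SimpleGraph.comap_adj] at hadj
    have hx := hmem x.1 x.2
    have hy := hmem y.1 y.2
    have : sdF f (f.symm x.1) ≠ sdF f (f.symm y.1) := by
      have := (adj_iff f (f.symm x.1) (f.symm y.1))
      apply this.mp
      simpa using hadj
    rw [hx, hy] at this
    exact this rfl
  have hbot : (completeBipartiteGraph (Fin n) (Fin m)).induce s = ⊥ := by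
    ext x y
    rw [SimpleGraph.bot_adj]
    exact ⟨fun hadj => hnoedge x y hadj, False.elim⟩
  have hr := hc.preconnected ⟨f 0, h0s⟩ ⟨f 1, h1s⟩
  rw [hbot, SimpleGraph.reachable_bot] at hr
  exact hne01 (f.injective (congrArg Subtype.val hr))

end Aux4

/-- For any proper labeling `f` of the complete bipartite graph `K_{n,m}` (i.e. every initial
segment of labels induces a connected subgraph), the monotone-path tree `T_f(K_{n,m})` has
spectral radius (largest eigenvalue of its adjacency matrix) exactly `√(n+m-1)`. -/
theorem stmt_10 (n m N : ℕ) (hn : 1 ≤ n) (hm : 1 ≤ m) (hN : N + 1 = n + m)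
    (f : Fin (N + 1) ≃ (Fin n ⊕ Fin m))
    (hf : ∀ k : Fin (N + 1),
      ((completeBipartiteGraph (Fin n) (Fin m)).induce {v | ∃ i ≤ k, f i = v}).Connected) :
    IsGreatest
      {μ : ℝ | ∃ y : {S : Finset (Fin (N + 1)) //
            IsMonPath (completeBipartiteGraph (Fin n) (Fin m)) f S} → ℝ,
          y ≠ 0 ∧
          (Matrix.of fun p q =>
              if (MPT (completeBipartiteGraph (Fin n) (Fin m)) f).Adj p q then (1 : ℝ)
              else 0).mulVec y = μ • y}
      (Real.sqrt ((n : ℝ) + (m : ℝ) - 1)) := by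
  have hN1 : 1 ≤ N := by omega
  have hNr : (0:ℝ) < N := by exact_mod_cast hN1
  have hcast : ((n : ℝ) + (m : ℝ) - 1) = (N : ℝ) := by
    have : (N : ℝ) + 1 = (n : ℝ) + (m : ℝ) := by exact_mod_cast hN
    linarith
  rw [hcast]
  have hs0 : (0:ℝ) < Real.sqrt N := Real.sqrt_pos.mpr hNr
  have hside := side01 f hN1 hf
  have heig := eigen f hN1 hside
  have hmv : ∀ (y : MV f → ℝ) (P : MV f),
      (Matrix.of fun p q =>
        if (MPT (completeBipartiteGraph (Fin n) (Fin m)) f).Adj p q then (1 : ℝ)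
        else 0).mulVec y P
      = ∑ Q : MV f, (if (MPT (completeBipartiteGraph (Fin n) (Fin m)) f).Adj P Q
          then (1:ℝ) else 0) * y Q := by
    intro y P
    rfl
  constructor
  · -- membership
    refine ⟨wF f, ?_, ?_⟩
    · intro hc
      have := wF_pos f hN1 (rootP f)
      rw [congrFun hc (rootP f)] at this
      exact lt_irrefl 0 this
    · funext P
      rw [hmv, heig P]
      simp [mul_comm]
  · -- upper bound
    rintro μ ⟨y, hy0, hyeq⟩
    obtain ⟨u, -, hmax⟩ := Finset.exists_max_image Finset.univ
      (fun P => |y P| / wF f P) ⟨rootP f, Finset.mem_univ _⟩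
    set t := |y u| / wF f u with htdef
    have hwu : 0 < wF f u := wF_pos f hN1 u
    have htpos : 0 < t := by
      obtain ⟨P, hP⟩ : ∃ P, y P ≠ 0 := by
        by_contra hc
        push_neg at hc
        exact hy0 (funext hc)
      have h1 : 0 < |y P| / wF f P := div_pos (abs_pos.mpr hP) (wF_pos f hN1 P)
      exact lt_of_lt_of_le h1 (hmax P (Finset.mem_univ _))
    have hbound : ∀ Q, |y Q| ≤ t * wF f Q := by
      intro Q
      have := hmax Q (Finset.mem_univ _)
      rwa [div_le_iff₀ (wF_pos f hN1 Q)] at this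
    have hyu : |y u| = t * wF f u := by
      rw [htdef, div_mul_cancel₀ _ (ne_of_gt hwu)]
    have hequ := congrFun hyeq u
    rw [hmv] at hequ
    have habs : |μ| * |y u| ≤ Real.sqrt N * (t * wF f u) := by
      have h1 : |μ * y u| = |μ| * |y u| := abs_mul μ (y u)
      have h2 : μ * y u = ∑ Q : MV f, (if (MPT (completeBipartiteGraph (Fin n) (Fin m)) f).Adj u Q
          then (1:ℝ) else 0) * y Q := by
        rw [hequ]; simp
      calc |μ| * |y u| = |∑ Q : MV f, (if (MPT (completeBipartiteGraph (Fin n) (Fin m)) f).Adj u Q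
            then (1:ℝ) else 0) * y Q| := by rw [← h1, h2]
        _ ≤ ∑ Q : MV f, |(if (MPT (completeBipartiteGraph (Fin n) (Fin m)) f).Adj u Q
            then (1:ℝ) else 0) * y Q| := Finset.abs_sum_le_sum_abs _ _
        _ ≤ ∑ Q : MV f, (if (MPT (completeBipartiteGraph (Fin n) (Fin m)) f).Adj u Q
            then (1:ℝ) else 0) * (t * wF f Q) := by
            apply Finset.sum_le_sum
            intro Q _
            rw [abs_mul]
            by_cases h : (MPT (completeBipartiteGraph (Fin n) (Fin m)) f).Adj u Q
            · rw [if_pos h]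
              simpa using hbound Q
            · rw [if_neg h]
              simp
        _ = t * ∑ Q : MV f, (if (MPT (completeBipartiteGraph (Fin n) (Fin m)) f).Adj u Q
            then (1:ℝ) else 0) * wF f Q := by
            rw [Finset.mul_sum]
            apply Finset.sum_congr rfl
            intro Q _
            ring
        _ = t * (Real.sqrt N * wF f u) := by rw [heig u]
        _ = Real.sqrt N * (t * wF f u) := by ring
    rw [hyu] at habs
    have htw : 0 < t * wF f u := mul_pos htpos hwu
    have : |μ| ≤ Real.sqrt N := by
      have := (mul_le_mul_iff_of_pos_right htw).mp habs
      exact this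
    exact le_trans (le_abs_self μ) this
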